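/- Let $m \geq 5$ with $m \equiv 1 \pmod 3$ and let $P_m$ be the vertex set of a regular $m$-gon inscribed in the unit circle with the geodesic metric. Then for every partition of $P_m$ into three nonempty subsets $X_1, X_2, X_3$, we have $\max_i \operatorname{diam} X_i \geq \frac{2\pi}{3} - \frac{2\pi}{3m}$, and this bound is attained by some partition. -/

import Mathlib

open Real

noncomputable def Pvert (n : ℕ) : Set (AddCircle (2 * π)) :=
  Set.range fun j : Fin n => ((2 * π * j / n : ℝ) : AddCircle (2 * π))

instance (n : ℕ) : Finite (Pvert n) := by unfold Pvert; exact (Set.finite_range _).to_subtype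

namespace Stmt9

variable (m : ℕ) [NeZero m]

noncomputable def vtx (a : ZMod m) : AddCircle (2 * π) :=
  ((2 * π * a.val / m : ℝ) : AddCircle (2 * π))

lemma vtx_mem (a : ZMod m) : vtx m a ∈ Pvert m :=
  ⟨⟨a.val, a.val_lt⟩, rfl⟩

set_option linter.unusedSectionVars false in
lemma mem_Pvert {x : AddCircle (2 * π)} (hx : x ∈ Pvert m) : ∃ a : ZMod m, x = vtx m a := by
  obtain ⟨j, rfl⟩ := hx
  refine ⟨(j : ZMod m), ?_⟩
  unfold vtx
  rw [ZMod.val_cast_of_lt j.isLt]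

lemma coe_congr {s t : ℤ} (h : s ≡ t [ZMOD (m:ℤ)]) :
    ((2 * π * s / m : ℝ) : AddCircle (2 * π)) = ((2 * π * t / m : ℝ) : AddCircle (2 * π)) := by
  have hm : (m:ℝ) ≠ 0 := Nat.cast_ne_zero.mpr (NeZero.ne m)
  obtain ⟨n, hn⟩ : (m:ℤ) ∣ s - t := Int.ModEq.dvd h.symm
  rw [QuotientAddGroup.eq_iff_sub_mem, AddSubgroup.mem_zmultiples_iff]
  refine ⟨n, ?_⟩
  have hst : (s:ℝ) = t + m * n := by
    have h2 : (s:ℝ) - t = m * n := by exact_mod_cast hn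
    linarith
  rw [zsmul_eq_mul]
  field_simp [hst]
  rw [hst]; ring

lemma norm_coe_int {t : ℤ} (h : 2 * t.natAbs ≤ m) :
    ‖((2 * π * t / m : ℝ) : AddCircle (2 * π))‖ = 2 * π * t.natAbs / m := by
  have hm : (0:ℝ) < m := Nat.cast_pos.mpr (Nat.pos_of_ne_zero (NeZero.ne m))
  have hπ := Real.pi_pos
  rw [AddCircle.norm_eq]
  have harg : (2*π)⁻¹ * (2 * π * t / m) = (t:ℝ) / m := by
    field_simp
  rw [harg]
  have habs : |(t:ℝ)| = (t.natAbs : ℝ) := by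
    simp [Nat.cast_natAbs]
  by_cases hc : 2 * t = (m:ℤ)
  · have ht2 : (t:ℝ) / m = 1/2 := by
      have h2 : (2:ℝ) * t = m := by exact_mod_cast hc
      field_simp
      linarith
    rw [ht2]
    have : round ((1:ℝ)/2) = 1 := by norm_num [round_eq]
    rw [this]
    have htm : (t:ℝ) - m = -t := by
      have h2 : (2:ℝ) * t = m := by exact_mod_cast hc
      linarith
    push_cast
    rw [show 2 * π * (t:ℝ) / m - 1 * (2*π) = 2 * π * ((t:ℝ) - m) / m by field_simp, htm]
    rw [abs_div, abs_mul, abs_neg, habs, abs_of_pos (by linarith), abs_of_pos hm]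
  · have hr : round ((t:ℝ)/m) = 0 := by
      rw [round_eq_zero_iff]
      constructor
      · rw [le_div_iff₀ hm]
        have : -(m:ℤ) ≤ 2 * t := by omega
        have : -(m:ℝ) ≤ 2 * t := by exact_mod_cast this
        linarith
      · rw [div_lt_iff₀ hm]
        have : 2 * t < (m:ℤ) := by omega
        have : (2:ℝ) * t < m := by exact_mod_cast this
        linarith
    rw [hr]
    push_cast
    rw [zero_mul, sub_zero, abs_div, abs_mul, habs, abs_of_pos (by linarith), abs_of_pos hm]

def cd (a b : ZMod m) : ℕ := min (a - b).val (b - a).val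

lemma cd_comm (a b : ZMod m) : cd m a b = cd m b a := Nat.min_comm _ _

lemma val_add_val {a b : ZMod m} (hab : a ≠ b) : (a - b).val + (b - a).val = m := by
  have h1 : b - a = -(a - b) := by ring
  have h2 : a - b ≠ 0 := sub_ne_zero.mpr hab
  rw [h1, ZMod.neg_val, if_neg h2]
  have := (a - b).val_lt
  have := (ZMod.val_eq_zero (a - b)).not.mpr h2
  omega

lemma sub_congr (a b : ZMod m) :
    ((a.val : ℤ) - b.val) ≡ ((a - b).val : ℤ) [ZMOD (m:ℤ)] := by
  rw [← ZMod.intCast_eq_intCast_iff]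
  push_cast
  simp [ZMod.natCast_val, ZMod.cast_id]

lemma dist_vtx (a b : ZMod m) : dist (vtx m a) (vtx m b) = 2 * π * cd m a b / m := by
  have hm : (m:ℝ) ≠ 0 := Nat.cast_ne_zero.mpr (NeZero.ne m)
  rcases eq_or_ne a b with rfl | hab
  · simp [cd, sub_self, ZMod.val_zero, dist_self]
  · have hkey := val_add_val m hab
    set s : ℤ := (a.val : ℤ) - (b.val : ℤ) with hs
    have e1 : vtx m a - vtx m b = ((2 * π * (s:ℝ) / m : ℝ) : AddCircle (2 * π)) := by
      show ((2 * π * a.val / m - 2 * π * b.val / m : ℝ) : AddCircle (2 * π)) = _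
      congr 1
      simp only [hs]
      push_cast
      ring
    have hdist : dist (vtx m a) (vtx m b) = ‖((2 * π * (s:ℝ) / m : ℝ) : AddCircle (2 * π))‖ := by
      rw [dist_eq_norm, e1]
    rcases le_or_gt ((a - b).val) ((b - a).val) with hle | hlt
    · have hcd : cd m a b = (a - b).val := min_eq_left hle
      have hcong : s ≡ (((a - b).val : ℤ)) [ZMOD (m:ℤ)] := sub_congr m a b
      rw [hdist, coe_congr m hcong,
        norm_coe_int m (t := ((a - b).val : ℤ)) (by simp only [Int.natAbs_natCast]; omega),
        Int.natAbs_natCast, hcd]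
    · have hcd : cd m a b = (b - a).val := min_eq_right hlt.le
      have hc2 : s ≡ (-(((b - a).val : ℤ))) [ZMOD (m:ℤ)] := by
        rw [← ZMod.intCast_eq_intCast_iff]
        simp only [hs]
        push_cast
        simp [ZMod.natCast_val, ZMod.cast_id]
      rw [hdist, coe_congr m hc2, norm_coe_int m (t := -(((b - a).val : ℤ)))
        (by simp only [Int.natAbs_neg, Int.natAbs_natCast]; omega),
        Int.natAbs_neg, Int.natAbs_natCast, hcd]

lemma vtx_inj : Function.Injective (vtx m) := by
  intro a b h
  have hm : (0:ℝ) < m := Nat.cast_pos.mpr (Nat.pos_of_ne_zero (NeZero.ne m))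
  have hπ := Real.pi_pos
  by_contra hab
  have hd := dist_vtx m a b
  rw [h, dist_self] at hd
  have hc : cd m a b ≠ 0 := by
    have hkey := val_add_val m hab
    have h1 := (ZMod.val_eq_zero (a - b)).not.mpr (sub_ne_zero.mpr hab)
    have h2 := (ZMod.val_eq_zero (b - a)).not.mpr (sub_ne_zero.mpr (Ne.symm hab))
    simp only [cd]
    omega
  have h1 : (0:ℝ) < cd m a b := by exact_mod_cast Nat.pos_of_ne_zero hc
  have : (0:ℝ) < 2 * π * cd m a b / m := by positivity
  linarith [hd]

lemma val_sub_of_le {a b : ZMod m} (h : b.val ≤ a.val) : (a - b).val = a.val - b.val := by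
  have h1 : a - b = ((a.val - b.val : ℕ) : ZMod m) := by
    have h2 : ((a.val - b.val : ℕ) : ZMod m) = (a.val : ZMod m) - (b.val : ZMod m) := by
      push_cast [h]; ring
    rw [h2]
    simp [ZMod.natCast_val, ZMod.cast_id]
  rw [h1, ZMod.val_cast_of_lt (by have := a.val_lt; omega)]

lemma cd_le (a b : ZMod m) : cd m a b ≤ Nat.dist a.val b.val := by
  rcases le_total b.val a.val with h | h
  · calc cd m a b ≤ (a - b).val := min_le_left _ _
      _ = a.val - b.val := val_sub_of_le m h
      _ ≤ Nat.dist a.val b.val := by simp [Nat.dist]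
  · calc cd m a b ≤ (b - a).val := min_le_right _ _
      _ = b.val - a.val := val_sub_of_le m h
      _ ≤ Nat.dist a.val b.val := by simp [Nat.dist]

lemma arc_card {t : ℕ} (h3 : 3 * t < m) (S : Finset (ZMod m)) (hS : S.Nonempty)
    (hd : ∀ a ∈ S, ∀ b ∈ S, cd m a b ≤ t) : S.card ≤ t + 1 := by
  obtain ⟨a0, ha0⟩ := hS
  classical
  set g : ZMod m → ℤ := fun a =>
    if (a - a0).val ≤ t then ((a - a0).val : ℤ) else -(((a0 - a).val : ℤ)) with hg
  have hrec : ∀ a ∈ S, a = a0 + ((g a : ℤ) : ZMod m) ∧ |g a| ≤ t := by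
    intro a ha
    have hmin := hd a ha a0 ha0
    by_cases hc : (a - a0).val ≤ t
    · refine ⟨?_, ?_⟩
      · simp only [hg, if_pos hc]
        push_cast
        simp only [ZMod.natCast_val, ZMod.cast_id]
        ring
      · simp only [hg, if_pos hc]
        rw [abs_of_nonneg (by positivity)]
        exact_mod_cast hc
    · have hc2 : (a0 - a).val ≤ t := by
        simp only [cd] at hmin; omega
      refine ⟨?_, ?_⟩
      · simp only [hg, if_neg hc]
        push_cast
        simp only [ZMod.natCast_val, ZMod.cast_id]
        ring
      · simp only [hg, if_neg hc]
        rw [abs_neg, abs_of_nonneg (by positivity)]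
        exact_mod_cast hc2
  have hginj : Set.InjOn g S := by
    intro a ha b hb hgab
    rw [(hrec a ha).1, (hrec b hb).1, hgab]
  obtain ⟨amax, hamax, hmax⟩ := S.exists_max_image g ⟨a0, ha0⟩
  obtain ⟨amin, hamin, hmin⟩ := S.exists_min_image g ⟨a0, ha0⟩
  have hΔ : g amax - g amin ≤ t := by
    by_contra hcon
    push_neg at hcon
    have habs1 := abs_le.mp (hrec amax hamax).2
    have habs2 := abs_le.mp (hrec amin hamin).2
    set Δ : ℤ := g amax - g amin with hΔdef
    have hΔpos : 0 < Δ := by omega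
    have hΔlt : Δ < m := by omega
    have hcast : ((Δ.toNat : ℕ) : ZMod m) = ((Δ : ℤ) : ZMod m) := by
      exact_mod_cast congrArg (fun z : ℤ => ((z : ℤ) : ZMod m)) (Int.toNat_of_nonneg hΔpos.le)
    have hsub : amax - amin = ((Δ.toNat : ℕ) : ZMod m) := by
      rw [hcast, (hrec amax hamax).1, (hrec amin hamin).1]
      show a0 + _ - (a0 + _) = _
      rw [Int.cast_sub]
      ring
    have hval : (amax - amin).val = Δ.toNat := by
      rw [hsub, ZMod.val_cast_of_lt (by omega)]
    have hmm := hd amax hamax amin hamin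
    simp only [cd, hval] at hmm
    have hne : amax ≠ amin := by
      intro hh; rw [hh] at hΔdef; omega
    have hvv := val_add_val m hne
    rw [hval] at hvv
    omega
  have hmaps : ∀ a ∈ S, g a ∈ Finset.Icc (g amin) (g amax) := by
    intro a ha
    exact Finset.mem_Icc.mpr ⟨hmin a ha, hmax a ha⟩
  have hge : g amin ≤ g amax := hmin amax hamax
  calc S.card ≤ (Finset.Icc (g amin) (g amax)).card :=
        Finset.card_le_card_of_injOn g hmaps hginj
    _ = (g amax + 1 - g amin).toNat := Int.card_Icc _ _
    _ ≤ t + 1 := by omega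

end Stmt9

open Stmt9 in
theorem stmt9 (m : ℕ) (hm : 5 ≤ m) (hmod : m % 3 = 1) :
    (∀ X : Fin 3 → Set (Pvert m), (∀ i, (X i).Nonempty) →
      Pairwise (Function.onFun Disjoint X) → (⋃ i, X i) = Set.univ →
      (2 * π / 3 - 2 * π / (3 * m)) ≤ ⨆ i, Metric.diam (X i)) ∧
    (∃ X : Fin 3 → Set (Pvert m), (∀ i, (X i).Nonempty) ∧
      Pairwise (Function.onFun Disjoint X) ∧ (⋃ i, X i) = Set.univ ∧
      (⨆ i, Metric.diam (X i)) = (2 * π / 3 - 2 * π / (3 * m))) := by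
  classical
  haveI : NeZero m := ⟨by omega⟩
  obtain ⟨k, hk, hk2⟩ : ∃ k, m = 3 * k + 1 ∧ 2 ≤ k := ⟨(m - 1) / 3, by omega, by omega⟩
  have hπ := Real.pi_pos
  have hmR : (0:ℝ) < m := Nat.cast_pos.mpr (by omega)
  have hm3 : (m:ℝ) = 3 * k + 1 := by exact_mod_cast congrArg (Nat.cast (R := ℝ)) hk
  have hK : 2 * π / 3 - 2 * π / (3 * m) = 2 * π * k / m := by
    field_simp
    rw [hm3]; ring
  have hbdd : ∀ (X : Fin 3 → Set (Pvert m)), BddAbove (Set.range fun i => Metric.diam (X i)) :=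
    fun X => (Set.finite_range _).bddAbove
  constructor
  · intro X hne hdis hcov
    rw [hK]
    by_contra hcon
    push_neg at hcon
    have hdiam : ∀ i, Metric.diam (X i) < 2 * π * k / m := fun i =>
      lt_of_le_of_lt (le_ciSup (hbdd X) i) hcon
    set S : Fin 3 → Finset (ZMod m) := fun i =>
      Finset.univ.filter (fun a => (⟨vtx m a, vtx_mem m a⟩ : Pvert m) ∈ X i) with hS
    have hcard : ∀ i, (S i).card ≤ k := by
      intro i
      obtain ⟨x, hx⟩ := hne i
      obtain ⟨a, hax⟩ := mem_Pvert m x.2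
      have hmemS : a ∈ S i := by
        simp only [hS, Finset.mem_filter, Finset.mem_univ, true_and]
        have hxx : (⟨vtx m a, vtx_mem m a⟩ : Pvert m) = x := Subtype.ext hax.symm
        rw [hxx]; exact hx
      have hpairs : ∀ a ∈ S i, ∀ b ∈ S i, cd m a b ≤ k - 1 := by
        intro a ha b hb
        simp only [hS, Finset.mem_filter, Finset.mem_univ, true_and] at ha hb
        have hbound : dist (⟨vtx m a, vtx_mem m a⟩ : Pvert m) ⟨vtx m b, vtx_mem m b⟩
            ≤ Metric.diam (X i) :=
          Metric.dist_le_diam_of_mem (Set.toFinite (X i)).isBounded ha hb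
        rw [Subtype.dist_eq, dist_vtx] at hbound
        have hlt : 2 * π * (cd m a b) / m < 2 * π * k / m :=
          lt_of_le_of_lt hbound (hdiam i)
        have hcc : (cd m a b : ℝ) < k := by
          by_contra hcc
          push_neg at hcc
          have : 2 * π * (k:ℝ) / m ≤ 2 * π * (cd m a b) / m := by gcongr
          linarith
        have : cd m a b < k := by exact_mod_cast hcc
        omega
      have harc := arc_card m (t := k - 1) (by omega) (S i) ⟨a, hmemS⟩ hpairs
      omega
    have hcover : ∀ a : ZMod m, ∃ i, a ∈ S i := by
      intro a
      have hx : (⟨vtx m a, vtx_mem m a⟩ : Pvert m) ∈ ⋃ i, X i := by rw [hcov]; trivial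
      obtain ⟨i, hi⟩ := Set.mem_iUnion.mp hx
      exact ⟨i, by simp only [hS, Finset.mem_filter, Finset.mem_univ, true_and]; exact hi⟩
    have hm1 : (Finset.univ : Finset (ZMod m)).card ≤ ∑ i : Fin 3, (S i).card := by
      calc (Finset.univ : Finset (ZMod m)).card
          ≤ ((Finset.univ : Finset (Fin 3)).biUnion S).card :=
            Finset.card_le_card (fun a _ => Finset.mem_biUnion.mpr
              (let ⟨i, hi⟩ := hcover a; ⟨i, Finset.mem_univ i, hi⟩))
        _ ≤ ∑ i : Fin 3, (S i).card := Finset.card_biUnion_le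
    have hmc : (Finset.univ : Finset (ZMod m)).card = m := by
      rw [Finset.card_univ, ZMod.card]
    have hsum : ∑ i : Fin 3, (S i).card ≤ 3 * k := by
      calc ∑ i : Fin 3, (S i).card ≤ ∑ _i : Fin 3, k :=
            Finset.sum_le_sum (fun i _ => hcard i)
        _ = 3 * k := by simp [Finset.sum_const, Finset.card_univ]
    omega
  · set blk : ZMod m → Fin 3 := fun a =>
      if a.val ≤ k then 0 else if a.val ≤ 2 * k then 1 else 2 with hblk
    set X : Fin 3 → Set (Pvert m) := fun i =>
      {x | ∃ a, blk a = i ∧ (x : AddCircle (2 * π)) = vtx m a} with hX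
    have hvx : ∀ a : ZMod m, (⟨vtx m a, vtx_mem m a⟩ : Pvert m) ∈ X (blk a) :=
      fun a => ⟨a, rfl, rfl⟩
    have h0 : blk (0 : ZMod m) = 0 := by
      simp only [hblk, ZMod.val_zero]
      rw [if_pos (by omega)]
    have hkv : ((k : ℕ) : ZMod m).val = k := ZMod.val_cast_of_lt (by omega)
    have h0k : blk ((k : ℕ) : ZMod m) = 0 := by
      simp only [hblk, hkv]
      rw [if_pos (by omega)]
    have h1 : blk ((k + 1 : ℕ) : ZMod m) = 1 := by
      simp only [hblk, ZMod.val_cast_of_lt (show k + 1 < m by omega)]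
      rw [if_neg (by omega), if_pos (by omega)]
    have h2 : blk ((2 * k + 1 : ℕ) : ZMod m) = 2 := by
      simp only [hblk, ZMod.val_cast_of_lt (show 2 * k + 1 < m by omega)]
      rw [if_neg (by omega), if_neg (by omega)]
    refine ⟨X, ?_, ?_, ?_, ?_⟩
    · intro i
      fin_cases i
      · exact ⟨_, h0 ▸ hvx 0⟩
      · exact ⟨_, h1 ▸ hvx _⟩
      · exact ⟨_, h2 ▸ hvx _⟩
    · intro i j hij
      rw [Function.onFun, Set.disjoint_left]
      rintro x ⟨a, hba, hxa⟩ ⟨b, hbb, hxb⟩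
      have hab : a = b := vtx_inj m (hxa.symm.trans hxb)
      exact hij (by rw [← hba, hab, hbb])
    · ext x
      simp only [Set.mem_iUnion, Set.mem_univ, iff_true]
      obtain ⟨a, ha⟩ := mem_Pvert m x.2
      exact ⟨blk a, a, rfl, ha⟩
    · rw [hK]
      have hub : ∀ i, Metric.diam (X i) ≤ 2 * π * k / m := by
        intro i
        apply Metric.diam_le_of_forall_dist_le (by positivity)
        rintro x ⟨a, hba, hxa⟩ y ⟨b, hbb, hyb⟩
        rw [Subtype.dist_eq, hxa, hyb, dist_vtx]
        have hnd : Nat.dist a.val b.val ≤ k := by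
          have hav := a.val_lt
          have hbv := b.val_lt
          have hblke : blk a = blk b := hba.trans hbb.symm
          simp only [hblk] at hblke
          split_ifs at hblke <;>
            first
            | exact absurd hblke (by decide)
            | (simp only [Nat.dist]; omega)
        have hcd := (cd_le m a b).trans hnd
        have : (cd m a b : ℝ) ≤ k := by exact_mod_cast hcd
        gcongr
      have hmem0 : (⟨vtx m 0, vtx_mem m 0⟩ : Pvert m) ∈ X 0 := h0 ▸ hvx 0
      have hmemk : (⟨vtx m ((k : ℕ) : ZMod m), vtx_mem m _⟩ : Pvert m) ∈ X 0 := h0k ▸ hvx _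
      have hd := Metric.dist_le_diam_of_mem (Set.toFinite (X 0)).isBounded hmemk hmem0
      rw [Subtype.dist_eq, dist_vtx] at hd
      have hcdk : cd m ((k : ℕ) : ZMod m) 0 = k := by
        have hne0 : ((k : ℕ) : ZMod m) ≠ 0 := by
          intro hh
          rw [hh, ZMod.val_zero] at hkv
          omega
        simp only [cd, sub_zero, zero_sub, ZMod.neg_val, if_neg hne0, hkv]
        exact min_eq_left (by omega)
      rw [hcdk] at hd
      exact le_antisymm (ciSup_le hub) (hd.trans (le_ciSup (hbdd X) 0))
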